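/- Let (T,<) be a linear order, k ≥ 1, δ₁,...,δₖ ⊆ T, O ⊆ {1,...,k}, and let F₁,...,Fₖ be as defined from δ's and O. For points a₁ ≤ d in T, the following are equivalent: (1) there exist points a₁ < a₂ < ... < aₖ ≤ d with aᵢ ∈ Fᵢ for all i; (2) there exists b ∈ [a₁, d] and a partition of [a₁, b] into nonempty consecutive order-convex intervals I₁ < ... < Iₖ with Iⱼ ⊆ δⱼ for all j and Iⱼ a singleton for each j ∈ O. -/

import Mathlib

def Until {T : Type*} [LinearOrder T] (A B : Set T) (t : T) : Prop :=
  ∃ t', t < t' ∧ t' ∈ B ∧ ∀ y, t < y → y < t' → y ∈ A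

/-- Order-convexity of a set. -/
def IsConvex {T : Type*} [LinearOrder T] (I : Set T) : Prop :=
  ∀ a ∈ I, ∀ b ∈ I, ∀ c, a ≤ c → c ≤ b → c ∈ I

/-- (P Until* Q) holds at t: some closed interval [t,t'] with t' > t splits into
nonempty convex pieces I₁ < I₂ with I₁ ⊆ P, I₂ ⊆ Q. -/
def UntilStar {T : Type*} [LinearOrder T] (P Q : Set T) (t : T) : Prop :=
  ∃ t', t < t' ∧ ∃ I₁ I₂ : Set T,
    I₁.Nonempty ∧ I₂.Nonempty ∧ IsConvex I₁ ∧ IsConvex I₂ ∧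
    I₁ ∪ I₂ = Set.Icc t t' ∧ Disjoint I₁ I₂ ∧
    (∀ a ∈ I₁, ∀ b ∈ I₂, a < b) ∧ I₁ ⊆ P ∧ I₂ ⊆ Q

/-- A partition of [a,b] into consecutive nonempty convex intervals I 0 < I 1 < … -/
def IsDecomp {T : Type*} [LinearOrder T] (a b : T) {k : ℕ} (I : Fin k → Set T) : Prop :=
  (∀ j, (I j).Nonempty) ∧ (∀ j, IsConvex (I j)) ∧
    (∀ i j : Fin k, i < j → ∀ x ∈ I i, ∀ y ∈ I j, x < y) ∧
    (⋃ j, I j) = Set.Icc a b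

/-- The defining equations of the formulas F₁,…,F_{k} from δ₁,…,δ_k and O
 (here k = n+1, indices are 0-based). `Until ∅` expresses `False Until`,
 i.e. "the successor of t exists and lies in …". -/
def DefinesF {T : Type*} [LinearOrder T] {n : ℕ} (δ F : Fin (n + 1) → Set T)
    (O : Finset (Fin (n + 1))) : Prop :=
  F (Fin.last n) = δ (Fin.last n) ∧
    ∀ i : Fin n,
      F i.castSucc = δ i.castSucc ∩ {t |
        if i.castSucc ∈ O then
          (if i.succ ∈ O then Until (∅ : Set T) (F i.succ) t
           else Until (δ i.succ) (F i.succ) t)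
        else
          (if i.succ ∈ O then Until (δ i.castSucc) (F i.succ) t
           else UntilStar (δ i.castSucc) (F i.succ) t)}

section helpers
variable {T : Type*} [LinearOrder T]

lemma isConvex_Icc (a b : T) : IsConvex (Set.Icc a b) :=
  fun x hx y hy c hxc hcy => ⟨hx.1.trans hxc, hcy.trans hy.2⟩

lemma isConvex_singleton (a : T) : IsConvex ({a} : Set T) := by
  intro x hx y hy c hxc hcy
  simp only [Set.mem_singleton_iff] at *
  subst hx hy; exact le_antisymm hcy hxc

lemma isConvex_Ioc (a b : T) : IsConvex (Set.Ioc a b) :=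
  fun x hx y hy c hxc hcy => ⟨hx.1.trans_le hxc, hcy.trans hy.2⟩

lemma isConvex_Ico (a b : T) : IsConvex (Set.Ico a b) :=
  fun x hx y hy c hxc hcy => ⟨hx.1.trans hxc, hcy.trans_lt hy.2⟩

lemma isConvex_inter {A B : Set T} (hA : IsConvex A) (hB : IsConvex B) :
    IsConvex (A ∩ B) :=
  fun x hx y hy c hxc hcy =>
    ⟨hA x hx.1 y hy.1 c hxc hcy, hB x hx.2 y hy.2 c hxc hcy⟩

lemma isConvex_Iic (a : T) : IsConvex (Set.Iic a) :=
  fun _ _ y hy c _ hcy => hcy.trans hy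

lemma isConvex_Iio (a : T) : IsConvex (Set.Iio a) :=
  fun _ _ y hy c _ hcy => hcy.trans_lt hy

lemma F_subset_delta {n : ℕ} {δ F : Fin (n + 1) → Set T} {O : Finset (Fin (n + 1))}
    (hF : DefinesF δ F O) : ∀ j, F j ⊆ δ j := by
  intro j
  induction j using Fin.lastCases with
  | last => rw [hF.1]
  | cast i => rw [hF.2 i]; exact Set.inter_subset_left

lemma step_lemma {n : ℕ} {δ F : Fin (n + 1) → Set T} {O : Finset (Fin (n + 1))}
    (hF : DefinesF δ F O) (i : Fin n) {t s : T} (ht : t ∈ F i.castSucc)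
    (hs : s ∈ F i.succ) (hts : t < s) :
    ∃ s', t < s' ∧ s' ≤ s ∧ s' ∈ F i.succ ∧ ∃ J₁ J₂ : Set T,
      IsConvex J₁ ∧ IsConvex J₂ ∧
      J₁ ∪ J₂ = Set.Icc t s' ∧ (∀ x ∈ J₁, ∀ y ∈ J₂, x < y) ∧
      J₁ ⊆ δ i.castSucc ∧ J₂ ⊆ δ i.succ ∧ t ∈ J₁ ∧ s' ∈ J₂ ∧
      (∀ y ∈ J₂, y ≤ s') ∧
      (i.castSucc ∈ O → J₁ = {t}) ∧ (i.succ ∈ O → J₂ = {s'}) := by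
  have hδF := F_subset_delta hF
  have ht' := ht
  rw [hF.2 i] at ht'
  obtain ⟨htδ, hcond⟩ := ht'
  simp only [Set.mem_setOf_eq] at hcond
  by_cases h1 : i.castSucc ∈ O <;> by_cases h2 : i.succ ∈ O <;>
    simp only [h1, h2, if_true, if_false] at hcond
  · -- both in O : immediate successor
    obtain ⟨t', htt', ht'F, hbet⟩ := hcond
    have ht's : t' ≤ s := by
      by_contra h
      exact (hbet s hts (not_le.mp h)).elim
    refine ⟨t', htt', ht's, ht'F, {t}, {t'}, isConvex_singleton t, isConvex_singleton t', ?_, ?_, ?_, ?_, rfl, rfl, ?_, fun _ => rfl, fun _ => rfl⟩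
    · ext x
      simp only [Set.mem_union, Set.mem_singleton_iff, Set.mem_Icc]
      constructor
      · rintro (rfl | rfl)
        · exact ⟨le_refl _, htt'.le⟩
        · exact ⟨htt'.le, le_refl _⟩
      · rintro ⟨hx1, hx2⟩
        rcases eq_or_lt_of_le hx1 with rfl | hx1
        · exact Or.inl rfl
        rcases eq_or_lt_of_le hx2 with rfl | hx2
        · exact Or.inr rfl
        exact (hbet x hx1 hx2).elim
    · rintro x rfl y rfl; exact htt'
    · rintro x rfl; exact htδ
    · rintro x rfl; exact hδF _ ht'F
    · rintro x rfl; exact le_refl _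
  · -- i ∈ O, i+1 ∉ O
    obtain ⟨t', htt', ht'F, hbet⟩ := hcond
    rcases le_total s t' with hst' | ht's
    · -- use s
      refine ⟨s, hts, le_refl _, hs, {t}, Set.Ioc t s, isConvex_singleton t, isConvex_Ioc t s, ?_, ?_, ?_, ?_, rfl, ⟨hts, le_refl _⟩, fun y hy => hy.2, fun _ => rfl, fun h => absurd h h2⟩
      · ext x
        simp only [Set.mem_union, Set.mem_singleton_iff, Set.mem_Ioc, Set.mem_Icc]
        constructor
        · rintro (rfl | ⟨h1, h2⟩)
          · exact ⟨le_refl _, hts.le⟩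
          · exact ⟨h1.le, h2⟩
        · rintro ⟨hx1, hx2⟩
          rcases eq_or_lt_of_le hx1 with rfl | hx1
          · exact Or.inl rfl
          · exact Or.inr ⟨hx1, hx2⟩
      · rintro x rfl y hy; exact hy.1
      · rintro x rfl; exact htδ
      · rintro y ⟨hy1, hy2⟩
        rcases eq_or_lt_of_le hy2 with rfl | hy2
        · exact hδF _ hs
        · exact hbet y hy1 (hy2.trans_le hst')
    · -- use t'
      refine ⟨t', htt', ht's, ht'F, {t}, Set.Ioc t t', isConvex_singleton t, isConvex_Ioc t t', ?_, ?_, ?_, ?_, rfl, ⟨htt', le_refl _⟩, fun y hy => hy.2, fun _ => rfl, fun h => absurd h h2⟩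
      · ext x
        simp only [Set.mem_union, Set.mem_singleton_iff, Set.mem_Ioc, Set.mem_Icc]
        constructor
        · rintro (rfl | ⟨h1, h2⟩)
          · exact ⟨le_refl _, htt'.le⟩
          · exact ⟨h1.le, h2⟩
        · rintro ⟨hx1, hx2⟩
          rcases eq_or_lt_of_le hx1 with rfl | hx1
          · exact Or.inl rfl
          · exact Or.inr ⟨hx1, hx2⟩
      · rintro x rfl y hy; exact hy.1
      · rintro x rfl; exact htδ
      · rintro y ⟨hy1, hy2⟩
        rcases eq_or_lt_of_le hy2 with rfl | hy2
        · exact hδF _ ht'F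
        · exact hbet y hy1 hy2
  · -- i ∉ O, i+1 ∈ O
    obtain ⟨t', htt', ht'F, hbet⟩ := hcond
    rcases le_total s t' with hst' | ht's
    · refine ⟨s, hts, le_refl _, hs, Set.Ico t s, {s}, isConvex_Ico t s, isConvex_singleton s, ?_, ?_, ?_, ?_, ⟨le_refl _, hts⟩, rfl, ?_, fun h => absurd h h1, fun _ => rfl⟩
      · ext x
        simp only [Set.mem_union, Set.mem_singleton_iff, Set.mem_Ico, Set.mem_Icc]
        constructor
        · rintro (⟨h1, h2⟩ | rfl)
          · exact ⟨h1, h2.le⟩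
          · exact ⟨hts.le, le_refl _⟩
        · rintro ⟨hx1, hx2⟩
          rcases eq_or_lt_of_le hx2 with rfl | hx2
          · exact Or.inr rfl
          · exact Or.inl ⟨hx1, hx2⟩
      · rintro x hx y rfl; exact hx.2
      · rintro x ⟨hx1, hx2⟩
        rcases eq_or_lt_of_le hx1 with rfl | hx1
        · exact htδ
        · exact hbet x hx1 (hx2.trans_le hst')
      · rintro x rfl; exact hδF _ hs
      · rintro y rfl; exact le_refl _
    · refine ⟨t', htt', ht's, ht'F, Set.Ico t t', {t'}, isConvex_Ico t t', isConvex_singleton t', ?_, ?_, ?_, ?_, ⟨le_refl _, htt'⟩, rfl, ?_, fun h => absurd h h1, fun _ => rfl⟩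
      · ext x
        simp only [Set.mem_union, Set.mem_singleton_iff, Set.mem_Ico, Set.mem_Icc]
        constructor
        · rintro (⟨h1, h2⟩ | rfl)
          · exact ⟨h1, h2.le⟩
          · exact ⟨htt'.le, le_refl _⟩
        · rintro ⟨hx1, hx2⟩
          rcases eq_or_lt_of_le hx2 with rfl | hx2
          · exact Or.inr rfl
          · exact Or.inl ⟨hx1, hx2⟩
      · rintro x hx y rfl; exact hx.2
      · rintro x ⟨hx1, hx2⟩
        rcases eq_or_lt_of_le hx1 with rfl | hx1
        · exact htδ
        · exact hbet x hx1 hx2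
      · rintro x rfl; exact hδF _ ht'F
      · rintro y rfl; exact le_refl _
  · -- neither in O : UntilStar
    obtain ⟨t', htt', I₁, I₂, hne₁, hne₂, hc₁, hc₂, huni, hdisj, hord, hsub₁, hsub₂⟩ := hcond
    have htI₁ : t ∈ I₁ := by
      have : t ∈ I₁ ∪ I₂ := by rw [huni]; exact ⟨le_refl _, htt'.le⟩
      rcases this with h | h
      · exact h
      · obtain ⟨x, hx⟩ := hne₁
        have h1 : x < t := hord x hx t h
        have h2 : t ≤ x := by
          have : x ∈ I₁ ∪ I₂ := Or.inl hx
          rw [huni] at this; exact this.1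
        exact absurd h1 (not_lt.mpr h2)
    have ht'I₂ : t' ∈ I₂ := by
      have : t' ∈ I₁ ∪ I₂ := by rw [huni]; exact ⟨htt'.le, le_refl _⟩
      rcases this with h | h
      · obtain ⟨x, hx⟩ := hne₂
        have h1 : t' < x := hord t' h x hx
        have h2 : x ≤ t' := by
          have : x ∈ I₁ ∪ I₂ := Or.inr hx
          rw [huni] at this; exact this.2
        exact absurd h1 (not_lt.mpr h2)
      · exact h
    have hI₁mem : ∀ x ∈ I₁, t ≤ x ∧ x ≤ t' := by
      intro x hx
      have : x ∈ I₁ ∪ I₂ := Or.inl hx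
      rw [huni] at this; exact this
    have hI₂mem : ∀ x ∈ I₂, t ≤ x ∧ x ≤ t' := by
      intro x hx
      have : x ∈ I₁ ∪ I₂ := Or.inr hx
      rw [huni] at this; exact this
    rcases le_or_gt t' s with ht's | hst'
    · refine ⟨t', htt', ht's, hsub₂ ht'I₂, I₁, I₂, hc₁, hc₂, huni, hord, hsub₁, fun x hx => hδF _ (hsub₂ hx), htI₁, ht'I₂, fun y hy => (hI₂mem y hy).2, fun h => absurd h h1, fun h => absurd h h2⟩
    · have hsmem : s ∈ I₁ ∪ I₂ := by rw [huni]; exact ⟨hts.le, hst'.le⟩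
      rcases hsmem with hsI₁ | hsI₂
      · -- s lands in I₁: take J₂ = {s}
        refine ⟨s, hts, le_refl _, hs, I₁ ∩ Set.Iio s, {s}, isConvex_inter hc₁ (isConvex_Iio s), isConvex_singleton s, ?_, ?_, fun x hx => hsub₁ hx.1, ?_, ⟨htI₁, hts⟩, rfl, ?_, fun h => absurd h h1, fun _ => rfl⟩
        · ext x
          simp only [Set.mem_union, Set.mem_inter_iff, Set.mem_Iio, Set.mem_singleton_iff, Set.mem_Icc]
          constructor
          · rintro (⟨hx, hx2⟩ | rfl)
            · exact ⟨(hI₁mem x hx).1, hx2.le⟩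
            · exact ⟨hts.le, le_refl _⟩
          · rintro ⟨hx1, hx2⟩
            rcases eq_or_lt_of_le hx2 with rfl | hx2
            · exact Or.inr rfl
            · have : x ∈ I₁ ∪ I₂ := by
                rw [huni]; exact ⟨hx1, hx2.le.trans hst'.le⟩
              rcases this with h | h
              · exact Or.inl ⟨h, hx2⟩
              · exact absurd (hord s hsI₁ x h) (not_lt.mpr hx2.le)
        · rintro x hx y rfl; exact hx.2
        · rintro x rfl; exact hδF _ hs
        · rintro y rfl; exact le_refl _
      · -- s lands in I₂: truncate I₂
        refine ⟨s, hts, le_refl _, hs, I₁, I₂ ∩ Set.Iic s, hc₁, isConvex_inter hc₂ (isConvex_Iic s), ?_, ?_, hsub₁, fun x hx => hδF _ (hsub₂ hx.1), htI₁, ⟨hsI₂, le_refl _⟩, fun y hy => hy.2, fun h => absurd h h1, fun h => absurd h h2⟩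
        · ext x
          simp only [Set.mem_union, Set.mem_inter_iff, Set.mem_Iic, Set.mem_Icc]
          constructor
          · rintro (hx | ⟨hx, hx2⟩)
            · exact ⟨(hI₁mem x hx).1, (hord x hx s hsI₂).le⟩
            · exact ⟨(hI₂mem x hx).1, hx2⟩
          · rintro ⟨hx1, hx2⟩
            have : x ∈ I₁ ∪ I₂ := by
              rw [huni]; exact ⟨hx1, hx2.trans hst'.le⟩
            rcases this with h | h
            · exact Or.inl h
            · exact Or.inr ⟨h, hx2⟩
        · rintro x hx y ⟨hy, _⟩; exact hord x hx y hy


lemma isConvex_union {A B : Set T} {p : T} (hA : IsConvex A) (hB : IsConvex B)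
    (hAp : ∀ x ∈ A, x ≤ p) (hpB : ∀ x ∈ B, p ≤ x) (hpA : p ∈ A) (hpB' : p ∈ B) :
    IsConvex (A ∪ B) := by
  rintro x (hx | hx) y (hy | hy) c hxc hcy
  · exact Or.inl (hA x hx y hy c hxc hcy)
  · rcases le_total c p with h | h
    · exact Or.inl (hA x hx p hpA c hxc h)
    · exact Or.inr (hB p hpB' y hy c h hcy)
  · have : c = p := le_antisymm (hcy.trans (hAp y hy)) ((hpB x hx).trans hxc)
    exact Or.inl (this ▸ hpA)
  · exact Or.inr (hB x hx y hy c hxc hcy)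

lemma fwd : ∀ (n : ℕ) (δ F : Fin (n+1) → Set T) (O : Finset (Fin (n+1))),
    DefinesF δ F O → ∀ a : Fin (n+1) → T, StrictMono a → (∀ i, a i ∈ F i) →
    ∃ b, a 0 ≤ b ∧ b ≤ a (Fin.last n) ∧ ∃ I : Fin (n+1) → Set T,
      IsDecomp (a 0) b I ∧ (∀ j, I j ⊆ δ j) ∧ (∀ j ∈ O, ∃ x, I j = {x}) := by
  intro n
  induction n with
  | zero =>
    intro δ F O hF a _ haF
    have h0 : Fin.last 0 = (0 : Fin 1) := Fin.fin_one_eq_zero _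
    refine ⟨a 0, le_refl _, by rw [h0], fun _ => {a 0}, ⟨fun _ => ⟨a 0, rfl⟩,
      fun _ => isConvex_singleton _, fun i j hij => by
        rw [Fin.fin_one_eq_zero i, Fin.fin_one_eq_zero j] at hij
        exact absurd hij (lt_irrefl _),
      ?_⟩, ?_, fun j _ => ⟨a 0, rfl⟩⟩
    · simp [Set.Icc_self]
    · intro j
      have : j = 0 := Fin.fin_one_eq_zero _
      subst this
      rintro x rfl
      have := haF 0
      rwa [show F 0 = δ 0 from h0 ▸ hF.1] at this
  | succ n ih =>
    intro δ F O hF a ha haF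
    -- Apply step lemma at index 0
    have ht0 : a 0 ∈ F ((0 : Fin (n+1)).castSucc) := by
      rw [Fin.castSucc_zero]; exact haF 0
    have hlt01 : (0 : Fin (n+2)) < (0 : Fin (n+1)).succ := by
      simp [Fin.lt_def]
    obtain ⟨s', hts', hs'le, hs'F, J₁, J₂, hcJ₁, hcJ₂, huni, hord, hsubJ₁, hsubJ₂,
      htJ₁, hs'J₂, hJ₂le, hsingJ₁, hsingJ₂⟩ :=
      step_lemma hF 0 ht0 (haF ((0 : Fin (n+1)).succ)) (ha hlt01)
    rw [Fin.castSucc_zero] at hsubJ₁ hsingJ₁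
    -- shifted structures
    set δ' : Fin (n+1) → Set T := fun j => δ j.succ with hδ'
    set F' : Fin (n+1) → Set T := fun j => F j.succ with hF'def
    set O' : Finset (Fin (n+1)) := Finset.univ.filter (fun j => j.succ ∈ O) with hO'
    have hF' : DefinesF δ' F' O' := by
      constructor
      · show F (Fin.last n).succ = δ (Fin.last n).succ
        rw [Fin.succ_last]; exact hF.1
      · intro i
        have hO1 : (i.castSucc ∈ O') = (i.succ.castSucc ∈ O) := by
          simp only [hO', Finset.mem_filter, Finset.mem_univ, true_and, Fin.succ_castSucc]
        have hO2 : (i.succ ∈ O') = (i.succ.succ ∈ O) := by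
          simp [hO']
        show F i.castSucc.succ = δ i.castSucc.succ ∩ _
        rw [Fin.succ_castSucc, hF.2 i.succ]
        congr 1
        ext t
        simp only [Set.mem_setOf_eq, hO1, hO2]
        rfl
    -- shifted anchors
    set a' : Fin (n+1) → T := fun j => if j = 0 then s' else a j.succ with ha'def
    have ha'0 : a' 0 = s' := if_pos rfl
    have ha'le : ∀ j, a' j ≤ a j.succ := by
      intro j
      by_cases hj : j = 0
      · subst hj; rw [ha'0]; exact hs'le
      · simp [ha'def, hj]
    have ha' : StrictMono a' := by
      intro j k hjk
      have hk0 : k ≠ 0 := by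
        intro h; subst h; exact absurd hjk (by simp [Fin.lt_def])
      by_cases hj : j = 0
      · subst hj
        rw [ha'0]
        simp only [ha'def, hk0, if_false]
        calc s' ≤ a (0 : Fin (n+1)).succ := hs'le
          _ < a k.succ := ha (by rwa [Fin.succ_lt_succ_iff, Fin.pos_iff_ne_zero])
      · simp only [ha'def, hj, hk0, if_false]
        exact ha (by rwa [Fin.succ_lt_succ_iff])
    have ha'F : ∀ j, a' j ∈ F' j := by
      intro j
      by_cases hj : j = 0
      · subst hj; rw [ha'0]; exact hs'F
      · simp only [ha'def, hF'def, hj, if_false]; exact haF _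
    obtain ⟨b, hab, hbla, I', hI'dec, hI'δ, hI'O⟩ := ih δ' F' O' hF' a' ha' ha'F
    rw [ha'0] at hab hI'dec
    obtain ⟨hne', hconv', hord', huni'⟩ := hI'dec
    have hbd : b ≤ a (Fin.last (n+1)) := by
      calc b ≤ a' (Fin.last n) := hbla
        _ ≤ a (Fin.last n).succ := ha'le _
        _ = a (Fin.last (n+1)) := by rw [Fin.succ_last]
    have hmem' : ∀ j, ∀ x ∈ I' j, s' ≤ x ∧ x ≤ b := by
      intro j x hx
      have : x ∈ ⋃ j, I' j := Set.mem_iUnion.mpr ⟨j, hx⟩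
      rwa [huni'] at this
    have hs'I0 : s' ∈ I' 0 := by
      have : s' ∈ ⋃ j, I' j := by rw [huni']; exact ⟨le_refl _, hab⟩
      obtain ⟨j, hj⟩ := Set.mem_iUnion.mp this
      rcases eq_or_ne j 0 with rfl | hj0
      · exact hj
      · obtain ⟨x, hx⟩ := hne' 0
        have h1 : x < s' := hord' 0 j (Fin.pos_iff_ne_zero.mpr hj0) x hx s' hj
        exact absurd h1 (not_lt.mpr (hmem' 0 x hx).1)
    have hgt' : ∀ j : Fin (n+1), 0 < j → ∀ y ∈ I' j, s' < y :=
      fun j hj y hy => hord' 0 j hj s' hs'I0 y hy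
    have hJ₁mem : ∀ x ∈ J₁, a 0 ≤ x ∧ x ≤ s' := by
      intro x hx
      have : x ∈ J₁ ∪ J₂ := Or.inl hx
      rwa [huni] at this
    have hJ₂mem : ∀ x ∈ J₂, a 0 ≤ x ∧ x ≤ s' := by
      intro x hx
      have : x ∈ J₁ ∪ J₂ := Or.inr hx
      rwa [huni] at this
    set I : Fin (n+2) → Set T :=
      Fin.cases J₁ (fun j => (if j = 0 then J₂ else ∅) ∪ I' j) with hIdef
    have hI0 : I 0 = J₁ := by simp [hIdef]
    have hIsucc : ∀ j : Fin (n+1), I j.succ = (if j = 0 then J₂ else ∅) ∪ I' j := by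
      intro j; simp [hIdef]
    have hs'b : s' ≤ b := by
      obtain ⟨x, hx⟩ := hne' 0
      exact (hmem' 0 x hx).1.trans (hmem' 0 x hx).2
    refine ⟨b, hts'.le.trans hs'b, hbd, I, ⟨?_, ?_, ?_, ?_⟩, ?_, ?_⟩
    · -- nonempty
      intro j
      induction j using Fin.cases with
      | zero => rw [hI0]; exact ⟨a 0, htJ₁⟩
      | succ j =>
        rw [hIsucc]
        obtain ⟨x, hx⟩ := hne' j
        exact ⟨x, Or.inr hx⟩
    · -- convex
      intro j
      induction j using Fin.cases with
      | zero => rw [hI0]; exact hcJ₁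
      | succ j =>
        rw [hIsucc]
        by_cases hj : j = 0
        · subst hj
          rw [if_pos rfl]
          exact isConvex_union hcJ₂ (hconv' 0) hJ₂le (fun x hx => (hmem' 0 x hx).1)
            hs'J₂ hs'I0
        · rw [if_neg hj, Set.empty_union]
          exact hconv' j
    · -- ordering
      intro p q hpq x hx y hy
      induction q using Fin.cases with
      | zero => exact absurd hpq (Fin.not_lt_zero _).elim
      | succ k =>
        induction p using Fin.cases with
        | zero =>
          rw [hI0] at hx
          rw [hIsucc] at hy
          rcases hy with hy | hy
          · by_cases hk : k = 0
            · subst hk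
              rw [if_pos rfl] at hy
              exact hord x hx y hy
            · rw [if_neg hk] at hy
              exact absurd hy (Set.notMem_empty y)
          · calc x < s' := hord x hx s' hs'J₂
              _ ≤ y := (hmem' k y hy).1
        | succ j =>
          have hjk : j < k := by rwa [Fin.succ_lt_succ_iff] at hpq
          have hk0 : k ≠ 0 := by
            intro h; subst h
            exact absurd hjk (Fin.not_lt_zero _)
          rw [hIsucc] at hx hy
          rw [if_neg hk0, Set.empty_union] at hy
          have hy' : s' < y := hgt' k (Fin.pos_iff_ne_zero.mpr hk0) y hy
          rcases hx with hx | hx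
          · by_cases hj : j = 0
            · subst hj
              rw [if_pos rfl] at hx
              exact lt_of_le_of_lt (hJ₂le x hx) hy'
            · rw [if_neg hj] at hx
              exact absurd hx (Set.notMem_empty x)
          · exact hord' j k hjk x hx y hy
    · -- union
      ext x
      simp only [Set.mem_iUnion, Set.mem_Icc]
      constructor
      · rintro ⟨p, hp⟩
        induction p using Fin.cases with
        | zero =>
          rw [hI0] at hp
          obtain ⟨h1, h2⟩ := hJ₁mem x hp
          exact ⟨h1, h2.trans hs'b⟩
        | succ j =>
          rw [hIsucc] at hp
          rcases hp with hp | hp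
          · by_cases hj : j = 0
            · subst hj
              rw [if_pos rfl] at hp
              obtain ⟨h1, h2⟩ := hJ₂mem x hp
              exact ⟨h1, h2.trans hs'b⟩
            · rw [if_neg hj] at hp
              exact absurd hp (Set.notMem_empty x)
          · obtain ⟨h1, h2⟩ := hmem' j x hp
            exact ⟨hts'.le.trans h1, h2⟩
      · rintro ⟨h1, h2⟩
        rcases le_total x s' with hxs | hxs
        · have : x ∈ J₁ ∪ J₂ := by rw [huni]; exact ⟨h1, hxs⟩
          rcases this with h | h
          · exact ⟨0, by rw [hI0]; exact h⟩
          · refine ⟨(0 : Fin (n+1)).succ, ?_⟩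
            rw [hIsucc, if_pos rfl]
            exact Or.inl h
        · have : x ∈ ⋃ j, I' j := by rw [huni']; exact ⟨hxs, h2⟩
          obtain ⟨j, hj⟩ := Set.mem_iUnion.mp this
          refine ⟨j.succ, ?_⟩
          rw [hIsucc]
          exact Or.inr hj
    · -- subsets of δ
      intro p
      induction p using Fin.cases with
      | zero => rw [hI0]; exact hsubJ₁
      | succ j =>
        rw [hIsucc]
        by_cases hj : j = 0
        · subst hj
          rw [if_pos rfl]
          exact Set.union_subset hsubJ₂ (hI'δ 0)
        · rw [if_neg hj, Set.empty_union]
          exact hI'δ j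
    · -- singletons on O
      intro p hp
      induction p using Fin.cases with
      | zero =>
        rw [hI0]
        exact ⟨a 0, hsingJ₁ hp⟩
      | succ j =>
        rw [hIsucc]
        have hjO' : j ∈ O' := by simp [hO', hp]
        obtain ⟨x, hx⟩ := hI'O j hjO'
        by_cases hj : j = 0
        · subst hj
          rw [if_pos rfl, hsingJ₂ hp, hx]
          have : s' ∈ I' 0 := hs'I0
          rw [hx] at this
          rw [Set.mem_singleton_iff] at this
          subst this
          exact ⟨s', by simp⟩
        · rw [if_neg hj, Set.empty_union]
          exact ⟨x, hx⟩

lemma bwd_sub {n : ℕ} {δ F : Fin (n + 1) → Set T} {O : Finset (Fin (n + 1))}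
    (hF : DefinesF δ F O) {a₁ b : T} (I : Fin (n + 1) → Set T)
    (hI : IsDecomp a₁ b I) (hδ : ∀ j, I j ⊆ δ j) (hO : ∀ j ∈ O, ∃ x, I j = {x}) :
    ∀ j, I j ⊆ F j := by
  obtain ⟨hne, hconv, hord, huni⟩ := hI
  have hmem : ∀ j, ∀ x ∈ I j, a₁ ≤ x ∧ x ≤ b := by
    intro j x hx
    have : x ∈ ⋃ j, I j := Set.mem_iUnion.mpr ⟨j, hx⟩
    rwa [huni] at this
  have hbetween : ∀ i : Fin n, ∀ t ∈ I i.castSucc, ∀ x ∈ I i.succ,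
      ∀ y, t < y → y < x → y ∈ I i.castSucc ∪ I i.succ := by
    intro i t ht x hx y hty hyx
    have hy : y ∈ ⋃ j, I j := by
      rw [huni]
      exact ⟨(hmem _ t ht).1.trans hty.le, hyx.le.trans (hmem _ x hx).2⟩
    obtain ⟨j, hj⟩ := Set.mem_iUnion.mp hy
    rcases lt_trichotomy j i.castSucc with h | h | h
    · exact absurd (hord j i.castSucc h y hj t ht) (not_lt.mpr hty.le)
    · exact Or.inl (h ▸ hj)
    · have : i.succ ≤ j := Fin.castSucc_lt_iff_succ_le.mp h
      rcases eq_or_lt_of_le this with rfl | h'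
      · exact Or.inr hj
      · exact absurd (hord i.succ j h' x hx y hj) (not_lt.mpr hyx.le)
  have hstep : ∀ i : Fin n, ∀ t ∈ I i.castSucc, ∀ x ∈ I i.succ, t < x := by
    intro i t ht x hx
    exact hord i.castSucc i.succ Fin.castSucc_lt_succ t ht x hx
  intro j
  induction j using Fin.reverseInduction with
  | last =>
    rw [hF.1]
    exact hδ _
  | cast i ih =>
    rw [hF.2 i]
    intro t ht
    refine ⟨hδ _ ht, ?_⟩
    simp only [Set.mem_setOf_eq]
    obtain ⟨x, hx⟩ := hne i.succ
    have htx : t < x := hstep i t ht x hx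
    by_cases h1 : i.castSucc ∈ O <;> by_cases h2 : i.succ ∈ O <;>
      simp only [h1, h2, if_true, if_false]
    · -- both in O
      obtain ⟨u, hu⟩ := hO i.castSucc h1
      obtain ⟨v, hv⟩ := hO i.succ h2
      refine ⟨x, htx, ih hx, ?_⟩
      intro y hty hyx
      rcases hbetween i t ht x hx y hty hyx with h | h
      · rw [hu, Set.mem_singleton_iff] at h ht
        exact absurd (ht ▸ h ▸ hty) (lt_irrefl _)
      · rw [hv, Set.mem_singleton_iff] at h hx
        exact absurd (hx ▸ h ▸ hyx) (lt_irrefl _)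
    · -- i ∈ O, i+1 ∉ O
      obtain ⟨u, hu⟩ := hO i.castSucc h1
      refine ⟨x, htx, ih hx, ?_⟩
      intro y hty hyx
      rcases hbetween i t ht x hx y hty hyx with h | h
      · rw [hu, Set.mem_singleton_iff] at h ht
        exact absurd (ht ▸ h ▸ hty) (lt_irrefl _)
      · exact hδ _ h
    · -- i ∉ O, i+1 ∈ O
      refine ⟨x, htx, ih hx, ?_⟩
      intro y hty hyx
      obtain ⟨v, hv⟩ := hO i.succ h2
      rcases hbetween i t ht x hx y hty hyx with h | h
      · exact hδ _ h
      · rw [hv, Set.mem_singleton_iff] at h hx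
        exact absurd (hx ▸ h ▸ hyx) (lt_irrefl _)
    · -- neither
      refine ⟨x, htx, I i.castSucc ∩ Set.Icc t x, I i.succ ∩ Set.Icc t x,
        ⟨t, ht, le_refl _, htx.le⟩, ⟨x, hx, htx.le, le_refl _⟩,
        isConvex_inter (hconv _) (isConvex_Icc t x),
        isConvex_inter (hconv _) (isConvex_Icc t x), ?_, ?_, ?_,
        fun z hz => hδ _ hz.1, fun z hz => ih hz.1⟩
      · ext y
        simp only [Set.mem_union, Set.mem_inter_iff, Set.mem_Icc]
        constructor
        · rintro (⟨_, h⟩ | ⟨_, h⟩) <;> exact h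
        · rintro ⟨hy1, hy2⟩
          rcases eq_or_lt_of_le hy1 with rfl | hy1
          · exact Or.inl ⟨ht, le_refl _, hy2⟩
          rcases eq_or_lt_of_le hy2 with rfl | hy2
          · exact Or.inr ⟨hx, hy1.le, le_refl _⟩
          rcases hbetween i t ht x hx y hy1 hy2 with h | h
          · exact Or.inl ⟨h, hy1.le, hy2.le⟩
          · exact Or.inr ⟨h, hy1.le, hy2.le⟩
      · rw [Set.disjoint_left]
        rintro z ⟨hz1, _⟩ ⟨hz2, _⟩
        exact absurd (hstep i z hz1 z hz2) (lt_irrefl z)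
      · rintro p ⟨hp, _⟩ q ⟨hq, _⟩
        exact hstep i p hp q hq

end helpers

theorem stmt_15 {T : Type*} [LinearOrder T] {n : ℕ}
    (δ F : Fin (n + 1) → Set T) (O : Finset (Fin (n + 1)))
    (hF : DefinesF δ F O) (a₁ d : T) (had : a₁ ≤ d) :
    (∃ a : Fin (n + 1) → T, StrictMono a ∧ a 0 = a₁ ∧ a (Fin.last n) ≤ d ∧
      ∀ i, a i ∈ F i) ↔
    (∃ b, a₁ ≤ b ∧ b ≤ d ∧ ∃ I : Fin (n + 1) → Set T,
      IsDecomp a₁ b I ∧ (∀ j, I j ⊆ δ j) ∧ (∀ j ∈ O, ∃ x, I j = {x})) := by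
  constructor
  · rintro ⟨a, ha, ha0, halast, haF⟩
    obtain ⟨b, h0b, hble, I, hdec, hδ, hO⟩ := fwd n δ F O hF a ha haF
    rw [ha0] at h0b hdec
    exact ⟨b, h0b, hble.trans halast, I, hdec, hδ, hO⟩
  · rintro ⟨b, hab, hbd, I, hI, hδ, hO⟩
    have hsub := bwd_sub hF I hI hδ hO
    obtain ⟨hne, hconv, hord, huni⟩ := hI
    have hmem : ∀ j, ∀ x ∈ I j, a₁ ≤ x ∧ x ≤ b := by
      intro j x hx
      have : x ∈ ⋃ j, I j := Set.mem_iUnion.mpr ⟨j, hx⟩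
      rwa [huni] at this
    have ha₁ : a₁ ∈ I 0 := by
      have : a₁ ∈ ⋃ j, I j := by rw [huni]; exact ⟨le_refl _, hab⟩
      obtain ⟨j, hj⟩ := Set.mem_iUnion.mp this
      rcases eq_or_ne j 0 with rfl | hj0
      · exact hj
      · obtain ⟨x, hx⟩ := hne 0
        have h1 : x < a₁ := hord 0 j (Fin.pos_iff_ne_zero.mpr hj0) x hx a₁ hj
        exact absurd h1 (not_lt.mpr (hmem 0 x hx).1)
    set a : Fin (n + 1) → T := fun j => if j = 0 then a₁ else (hne j).choose with hadef
    have haI : ∀ j, a j ∈ I j := by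
      intro j
      by_cases hj : j = 0
      · subst hj; simpa [hadef] using ha₁
      · simp only [hadef, hj, if_false]
        exact (hne j).choose_spec
    refine ⟨a, ?_, if_pos rfl, ?_, fun i => hsub i (haI i)⟩
    · intro j k hjk
      exact hord j k hjk (a j) (haI j) (a k) (haI k)
    · exact (hmem _ _ (haI (Fin.last n))).2.trans hbd
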